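/- Fix n ≥ 2 and ε ∈ {0,1}. Suppose nonnegative real weights h_y (0 ≤ y ≤ n−1), v_x (0 ≤ x ≤ n−1), λ⁺_c (−(n−1) ≤ c ≤ n−1) and λ⁻_c (0 ≤ c ≤ 2n−2) satisfy the covering condition h_y + v_x + λ⁺_{x−y} + λ⁻_{x+y} ≥ 1 for every point (x,y) ∈ C_ε(n). Then every no-three-in-line set S ⊆ C_ε(n) satisfies |S| ≤ 2( Σ_{y=0}^{n−1} h_y + Σ_{x=0}^{n−1} v_x + Σ_{c=−(n−1)}^{n−1} λ⁺_c + Σ_{c=0}^{2n−2} λ⁻_c ). -/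

import Mathlib

/-- The `n × n` integer grid `G_n = {0,…,n−1} × {0,…,n−1} ⊆ ℤ²`. -/
noncomputable def grid (n : ℕ) : Finset (ℤ × ℤ) :=
  Finset.Icc (0 : ℤ) ((n : ℤ) - 1) ×ˢ Finset.Icc (0 : ℤ) ((n : ℤ) - 1)

/-- The parity (checkerboard) class `C_ε(n) = {(x,y) ∈ G_n : x + y ≡ ε (mod 2)}`. -/
noncomputable def gridClass (n : ℕ) (ε : ℕ) : Finset (ℤ × ℤ) :=
  (grid n).filter (fun P => (P.1 + P.2) % 2 = (ε : ℤ))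

/-- Three points of `ℤ²` are collinear. -/
def Collinear3 (P Q R : ℤ × ℤ) : Prop :=
  (Q.1 - P.1) * (R.2 - P.2) = (R.1 - P.1) * (Q.2 - P.2)

/-- A finite set is no-three-in-line if no three distinct points of it are collinear. -/
def NTIL (S : Finset (ℤ × ℤ)) : Prop :=
  ∀ P ∈ S, ∀ Q ∈ S, ∀ R ∈ S, P ≠ Q → P ≠ R → Q ≠ R → ¬ Collinear3 P Q R

lemma fiber_card_le (S : Finset (ℤ × ℤ)) (hNTIL : NTIL S) (f : ℤ × ℤ → ℤ)
    (hf : ∀ P Q R : ℤ × ℤ, f P = f Q → f P = f R → Collinear3 P Q R) (c : ℤ) :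
    (S.filter (fun P => f P = c)).card ≤ 2 := by
  by_contra hlt
  push_neg at hlt
  obtain ⟨P, Q, R, hP, hQ, hR, hPQ, hPR, hQR⟩ := Finset.two_lt_card_iff.mp hlt
  simp only [Finset.mem_filter] at hP hQ hR
  exact hNTIL P hP.1 Q hQ.1 R hR.1 hPQ hPR hQR
    (hf P Q R (hP.2.trans hQ.2.symm) (hP.2.trans hR.2.symm))

lemma sum_comp_le (S : Finset (ℤ × ℤ)) (f : ℤ × ℤ → ℤ) (I : Finset ℤ) (w : ℤ → ℝ)
    (hw : ∀ c ∈ I, 0 ≤ w c) (hmap : ∀ P ∈ S, f P ∈ I)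
    (hfib : ∀ c, (S.filter (fun P => f P = c)).card ≤ 2) :
    ∑ P ∈ S, w (f P) ≤ 2 * ∑ c ∈ I, w c := by
  rw [← Finset.sum_fiberwise_of_maps_to hmap, Finset.mul_sum]
  refine Finset.sum_le_sum fun c hc => ?_
  have : ∑ P ∈ S.filter (fun P => f P = c), w (f P)
      = (S.filter (fun P => f P = c)).card • w c := by
    rw [Finset.sum_congr rfl (fun P hP => by
      rw [(Finset.mem_filter.mp hP).2]), Finset.sum_const]
  rw [this, nsmul_eq_mul]
  have h2 : ((S.filter (fun P => f P = c)).card : ℝ) ≤ 2 := by exact_mod_cast hfib c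
  exact mul_le_mul_of_nonneg_right h2 (hw c hc)

/-- Any feasible nonnegative dual weighting of rows, columns and slope-`±1` diagonals
covering every point of the parity class `C_ε(n)` gives an upper bound for every
no-three-in-line set contained in `C_ε(n)`. -/
theorem dual_certificate_bound (n : ℕ) (hn : 2 ≤ n) (ε : ℕ) (hε : ε ≤ 1)
    (h v lp lm : ℤ → ℝ)
    (hh : ∀ y ∈ Finset.Icc (0 : ℤ) ((n : ℤ) - 1), 0 ≤ h y)
    (hv : ∀ x ∈ Finset.Icc (0 : ℤ) ((n : ℤ) - 1), 0 ≤ v x)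
    (hlp : ∀ c ∈ Finset.Icc (-((n : ℤ) - 1)) ((n : ℤ) - 1), 0 ≤ lp c)
    (hlm : ∀ c ∈ Finset.Icc (0 : ℤ) (2 * (n : ℤ) - 2), 0 ≤ lm c)
    (hcov : ∀ P ∈ gridClass n ε, 1 ≤ h P.2 + v P.1 + lp (P.1 - P.2) + lm (P.1 + P.2))
    (S : Finset (ℤ × ℤ)) (hS : S ⊆ gridClass n ε) (hNTIL : NTIL S) :
    (S.card : ℝ) ≤ 2 * ((∑ y ∈ Finset.Icc (0 : ℤ) ((n : ℤ) - 1), h y)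
      + (∑ x ∈ Finset.Icc (0 : ℤ) ((n : ℤ) - 1), v x)
      + (∑ c ∈ Finset.Icc (-((n : ℤ) - 1)) ((n : ℤ) - 1), lp c)
      + (∑ c ∈ Finset.Icc (0 : ℤ) (2 * (n : ℤ) - 2), lm c)) := by
  have hmem : ∀ P ∈ S, P.1 ∈ Finset.Icc (0 : ℤ) ((n : ℤ) - 1)
      ∧ P.2 ∈ Finset.Icc (0 : ℤ) ((n : ℤ) - 1) := by
    intro P hP
    have := hS hP
    simp only [gridClass, grid, Finset.mem_filter, Finset.mem_product] at this
    exact this.1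
  have h1 : (S.card : ℝ) ≤ ∑ P ∈ S, (h P.2 + v P.1 + lp (P.1 - P.2) + lm (P.1 + P.2)) := by
    calc (S.card : ℝ) = ∑ P ∈ S, (1 : ℝ) := by simp
    _ ≤ _ := Finset.sum_le_sum fun P hP => hcov P (hS hP)
  have h2 : ∑ P ∈ S, h P.2 ≤ 2 * ∑ y ∈ Finset.Icc (0 : ℤ) ((n : ℤ) - 1), h y :=
    sum_comp_le S Prod.snd _ h hh (fun P hP => (hmem P hP).2)
      (fiber_card_le S hNTIL _ (fun P Q R e1 e2 => by
        unfold Collinear3; rw [show R.2 = P.2 from e2.symm, show Q.2 = P.2 from e1.symm]; ring))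
  have h3 : ∑ P ∈ S, v P.1 ≤ 2 * ∑ x ∈ Finset.Icc (0 : ℤ) ((n : ℤ) - 1), v x :=
    sum_comp_le S Prod.fst _ v hv (fun P hP => (hmem P hP).1)
      (fiber_card_le S hNTIL _ (fun P Q R e1 e2 => by
        unfold Collinear3; rw [show R.1 = P.1 from e2.symm, show Q.1 = P.1 from e1.symm]; ring))
  have h4 : ∑ P ∈ S, lp (P.1 - P.2)
      ≤ 2 * ∑ c ∈ Finset.Icc (-((n : ℤ) - 1)) ((n : ℤ) - 1), lp c :=
    sum_comp_le S (fun P => P.1 - P.2) _ lp hlp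
      (fun P hP => by
        obtain ⟨hx, hy⟩ := hmem P hP
        simp only [Finset.mem_Icc] at *
        omega)
      (fiber_card_le S hNTIL _ (fun P Q R e1 e2 => by
        have e1' : P.1 - P.2 = Q.1 - Q.2 := e1
        have e2' : P.1 - P.2 = R.1 - R.2 := e2
        unfold Collinear3
        have a1 : Q.1 - P.1 = Q.2 - P.2 := by omega
        have a2 : R.1 - P.1 = R.2 - P.2 := by omega
        rw [a1, a2]; ring))
  have h5 : ∑ P ∈ S, lm (P.1 + P.2)
      ≤ 2 * ∑ c ∈ Finset.Icc (0 : ℤ) (2 * (n : ℤ) - 2), lm c :=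
    sum_comp_le S (fun P => P.1 + P.2) _ lm hlm
      (fun P hP => by
        obtain ⟨hx, hy⟩ := hmem P hP
        simp only [Finset.mem_Icc] at *
        omega)
      (fiber_card_le S hNTIL _ (fun P Q R e1 e2 => by
        have e1' : P.1 + P.2 = Q.1 + Q.2 := e1
        have e2' : P.1 + P.2 = R.1 + R.2 := e2
        unfold Collinear3
        have a1 : Q.1 - P.1 = -(Q.2 - P.2) := by omega
        have a2 : R.1 - P.1 = -(R.2 - P.2) := by omega
        rw [a1, a2]; ring))
  calc (S.card : ℝ) ≤ ∑ P ∈ S, (h P.2 + v P.1 + lp (P.1 - P.2) + lm (P.1 + P.2)) := h1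
    _ = (∑ P ∈ S, h P.2) + (∑ P ∈ S, v P.1) + (∑ P ∈ S, lp (P.1 - P.2))
        + (∑ P ∈ S, lm (P.1 + P.2)) := by
      simp [Finset.sum_add_distrib]
    _ ≤ _ := by linarith
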